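/- Let X and Y be non-compact Hausdorff spaces with metrisable compactifications hX and hY, and let ℰ_{hX} and ℰ_{hY} be the continuously controlled coarse structures. Then (X, ℰ_{hX}) and (Y, ℰ_{hY}) are coarsely equivalent if and only if the coronas νX = hX \ X and νY = hY \ Y are homeomorphic. -/

import Mathlib

section CoarseNotions

variable {α β : Type*}

/-- `f` is coarsely uniform w.r.t. collections of entourages `𝓔`, `𝓕`. -/
def CoarselyUniformP (𝓔 : Set (α × α) → Prop) (𝓕 : Set (β × β) → Prop) (f : α → β) : Prop :=
  ∀ E, 𝓔 E → 𝓕 (Prod.map f f '' E)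

/-- A set is bounded if it is contained in `E(x)` for some entourage `E` and point `x`. -/
def IsBoundedP (𝓔 : Set (α × α) → Prop) (B : Set α) : Prop :=
  ∃ E x, 𝓔 E ∧ B ⊆ {y | (y, x) ∈ E}

/-- `f` is coarsely proper if preimages of bounded sets are bounded. -/
def CoarselyProperP (𝓔 : Set (α × α) → Prop) (𝓕 : Set (β × β) → Prop) (f : α → β) : Prop :=
  ∀ B, IsBoundedP 𝓕 B → IsBoundedP 𝓔 (f ⁻¹' B)

/-- A coarse map is coarsely uniform and coarsely proper. -/
def CoarseMapP (𝓔 : Set (α × α) → Prop) (𝓕 : Set (β × β) → Prop) (f : α → β) : Prop :=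
  CoarselyUniformP 𝓔 𝓕 f ∧ CoarselyProperP 𝓔 𝓕 f

/-- Two maps into `α` are close if `{(f s, g s) : s ∈ S}` is an entourage. -/
def CloseP {S : Type*} (𝓔 : Set (α × α) → Prop) (f g : S → α) : Prop :=
  𝓔 (Set.range fun s => (f s, g s))

/-- The coarse spaces `α` and `β` are coarsely equivalent. -/
def CoarselyEquivalentP (𝓔 : Set (α × α) → Prop) (𝓕 : Set (β × β) → Prop) : Prop :=
  ∃ f : α → β, ∃ g : β → α, CoarseMapP 𝓔 𝓕 f ∧ CoarseMapP 𝓕 𝓔 g ∧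
    CloseP 𝓔 (g ∘ f) id ∧ CloseP 𝓕 (f ∘ g) id

/-- `E(x) = {y : (y, x) ∈ E}`. -/
def ballP (E : Set (α × α)) (x : α) : Set α := {y | (y, x) ∈ E}

/-- `asdim ≤ n` w.r.t. the collection `𝓔` of entourages. -/
def AsdimLEP (𝓔 : Set (α × α) → Prop) (n : ℕ) : Prop :=
  ∀ L, 𝓔 L → ∃ 𝒰 : Set (Set α),
    (∀ x : α, ∃ U ∈ 𝒰, x ∈ U) ∧
    𝓔 (⋃ U ∈ 𝒰, U ×ˢ U) ∧
    (∀ x : α, ∃ U ∈ 𝒰, ballP L x ⊆ U) ∧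
    (∀ x : α, {U | U ∈ 𝒰 ∧ x ∈ U}.encard ≤ ((n : ℕ∞) + 1))

end CoarseNotions

/-- Given a compactification `K` of `X ⊆ K`, a set `E ⊆ X × X` is controlled if its
closure in `K × K` meets the boundary only in the diagonal. -/
def ContrEnt (K : Type*) [TopologicalSpace K] (X : Set K) (E : Set (↥X × ↥X)) : Prop :=
  closure ((fun p : ↥X × ↥X => ((p.1 : K), (p.2 : K))) '' E) ⊆
    (X ×ˢ X) ∪ {p : K × K | p.1 = p.2}


open Filter Topology Metric Set

set_option linter.unusedSectionVars false

section AuxCC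

variable {K : Type*} [MetricSpace K] [CompactSpace K]

lemma corona_nonempty {X : Set K} (hnc : ¬ IsCompact X) : (Xᶜ).Nonempty := by
  rw [Set.nonempty_compl]
  intro h
  exact hnc (h ▸ isCompact_univ)

lemma setX_nonempty {X : Set K} (hd : Dense X) (hnc : ¬ IsCompact X) : X.Nonempty := by
  obtain ⟨p, _⟩ := corona_nonempty hnc
  have : Nonempty K := ⟨p⟩
  exact hd.nonempty

lemma contr_forward {X : Set K} {E : Set (↥X × ↥X)} (hE : ContrEnt K X E)
    {u : ℕ → ↥X × ↥X} (hu : ∀ n, u n ∈ E) {p q : K}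
    (hp : Tendsto (fun n => ((u n).1 : K)) atTop (𝓝 p))
    (hq : Tendsto (fun n => ((u n).2 : K)) atTop (𝓝 q)) :
    (p ∈ X ∧ q ∈ X) ∨ p = q := by
  have hmem : (p, q) ∈ closure ((fun p : ↥X × ↥X => ((p.1 : K), (p.2 : K))) '' E) :=
    mem_closure_of_tendsto (hp.prodMk_nhds hq)
      (Filter.Eventually.of_forall fun n => Set.mem_image_of_mem _ (hu n))
  rcases hE hmem with h | h
  · exact Or.inl ⟨h.1, h.2⟩
  · exact Or.inr h

lemma contr_of_tendsto_diag {X : Set K} {u v : ℕ → ↥X} {a : K}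
    (hu : Tendsto (fun n => (u n : K)) atTop (𝓝 a))
    (hv : Tendsto (fun n => (v n : K)) atTop (𝓝 a)) :
    ContrEnt K X (Set.range fun n => (u n, v n)) := by
  intro z hz
  have himg : (fun p : ↥X × ↥X => ((p.1 : K), (p.2 : K))) '' (Set.range fun n => (u n, v n))
      = Set.range (fun n => ((u n : K), (v n : K))) := by
    rw [← Set.range_comp]; rfl
  rw [himg] at hz
  have hw : Tendsto (fun n => ((u n : K), (v n : K))) atTop (𝓝 (a, a)) := hu.prodMk_nhds hv
  have hcl : closure (Set.range fun n => ((u n : K), (v n : K)))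
      ⊆ insert (a, a) (Set.range fun n => ((u n : K), (v n : K))) :=
    closure_minimal (Set.subset_insert _ _) hw.isCompact_insert_range.isClosed
  rcases Set.mem_insert_iff.mp (hcl hz) with h | h
  · exact Or.inr (by simp [h])
  · obtain ⟨n, rfl⟩ := h
    exact Or.inl ⟨(u n).2, (v n).2⟩

lemma closure_image_subset_of_bounded {X : Set K} {B : Set ↥X}
    (hB : IsBoundedP (ContrEnt K X) B) :
    closure ((fun b : ↥X => (b : K)) '' B) ⊆ X := by
  obtain ⟨E, x₀, hE, hsub⟩ := hB
  intro z hz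
  rcases mem_closure_iff_seq_limit.mp hz with ⟨c, hc, hcz⟩
  have hc' := fun n => (Set.mem_image _ _ _).mp (hc n)
  choose b hbB hbeq using hc'
  have hb1 : Tendsto (fun n => ((b n : K))) atTop (𝓝 z) := by
    simp only [hbeq]; exact hcz
  have h := contr_forward (u := fun n => (b n, x₀)) hE (fun n => hsub (hbB n)) hb1
    (q := (x₀ : K)) (by exact tendsto_const_nhds)
  rcases h with h | h
  · exact h.1
  · rw [h]; exact x₀.2

lemma bounded_of_closure_image_subset {X : Set K} {B : Set ↥X} (hne : X.Nonempty)
    (h : closure ((fun b : ↥X => (b : K)) '' B) ⊆ X) :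
    IsBoundedP (ContrEnt K X) B := by
  obtain ⟨x₀, hx₀⟩ := hne
  refine ⟨B ×ˢ ({⟨x₀, hx₀⟩} : Set ↥X), ⟨x₀, hx₀⟩, ?_, fun y hy => ⟨hy, rfl⟩⟩
  intro z hz
  have himg : (fun p : ↥X × ↥X => ((p.1 : K), (p.2 : K))) '' (B ×ˢ ({⟨x₀, hx₀⟩} : Set ↥X))
      ⊆ ((fun b : ↥X => (b : K)) '' B) ×ˢ ({x₀} : Set K) := by
    rintro _ ⟨⟨b, x⟩, ⟨hb, hx⟩, rfl⟩
    have hx' : x = ⟨x₀, hx₀⟩ := Set.mem_singleton_iff.mp hx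
    exact ⟨⟨b, hb, rfl⟩, by simp [hx']⟩
  have h2 : closure ((fun p : ↥X × ↥X => ((p.1 : K), (p.2 : K))) ''
      (B ×ˢ ({⟨x₀, hx₀⟩} : Set ↥X))) ⊆ X ×ˢ X := by
    refine (closure_mono himg).trans ?_
    rw [closure_prod_eq, closure_singleton]
    exact Set.prod_mono h (Set.singleton_subset_iff.mpr hx₀)
  exact Or.inl (h2 hz)

lemma mem_of_infDist_pos {X : Set K} (hXopen : IsOpen X) {x : K}
    (hx : 0 < infDist x Xᶜ) : x ∈ X := by
  by_contra h
  exact hx.ne' (infDist_zero_of_mem h)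

lemma infDist_pos_of_mem {X : Set K} (hXopen : IsOpen X) (hcne : (Xᶜ).Nonempty) {x : K}
    (hx : x ∈ X) : 0 < infDist x Xᶜ :=
  (hXopen.isClosed_compl.notMem_iff_infDist_pos hcne).mp (by simpa using hx)

end AuxCC
section TwoSpace

variable {K₁ K₂ : Type*} [MetricSpace K₁] [MetricSpace K₂] [CompactSpace K₁] [CompactSpace K₂]
variable {X : Set K₁} {Y : Set K₂}

lemma tendsto_corona_of_proper {f : ↥X → ↥Y}
    (hYopen : IsOpen Y) (hYnc : ¬IsCompact Y)
    (hf : CoarselyProperP (ContrEnt K₁ X) (ContrEnt K₂ Y) f)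
    {u : ℕ → ↥X} {a : K₁} (ha : a ∉ X)
    (hu : Tendsto (fun n => (u n : K₁)) atTop (𝓝 a))
    {q : K₂} (hq : Tendsto (fun n => (f (u n) : K₂)) atTop (𝓝 q)) : q ∉ Y := by
  intro hqY
  have hYcne := corona_nonempty hYnc
  have hδ : 0 < infDist q Yᶜ := infDist_pos_of_mem hYopen hYcne hqY
  set δ := infDist q Yᶜ with hδdef
  have hBb : IsBoundedP (ContrEnt K₂ Y) {y : ↥Y | δ/2 ≤ infDist (y : K₂) Yᶜ} := by
    refine bounded_of_closure_image_subset ⟨q, hqY⟩ ?_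
    have hsub : (fun b : ↥Y => (b : K₂)) '' {y : ↥Y | δ/2 ≤ infDist (y : K₂) Yᶜ}
        ⊆ {z : K₂ | δ/2 ≤ infDist z Yᶜ} := by
      rintro _ ⟨y, hy, rfl⟩; exact hy
    refine (closure_minimal hsub ?_).trans ?_
    · exact isClosed_le continuous_const (continuous_infDist_pt _)
    · intro z hz
      exact mem_of_infDist_pos hYopen (lt_of_lt_of_le (by linarith) hz)
  have hclo := closure_image_subset_of_bounded (hf _ hBb)
  have hev : ∀ᶠ n in atTop, u n ∈ f ⁻¹' {y : ↥Y | δ/2 ≤ infDist (y : K₂) Yᶜ} := by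
    have ht : Tendsto (fun n => infDist ((f (u n) : K₂)) Yᶜ) atTop (𝓝 δ) :=
      ((continuous_infDist_pt (Yᶜ)).tendsto q).comp hq
    filter_upwards [Filter.Tendsto.eventually_const_le (by linarith : δ/2 < δ) ht] with n hn
    exact hn
  have : a ∈ closure ((fun b : ↥X => (b : K₁)) ''
      (f ⁻¹' {y : ↥Y | δ/2 ≤ infDist (y : K₂) Yᶜ})) :=
    mem_closure_of_tendsto hu (hev.mono fun n hn => Set.mem_image_of_mem _ hn)
  exact ha (hclo this)

lemma unique_limit_of_uniform {f : ↥X → ↥Y}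
    (hfu : CoarselyUniformP (ContrEnt K₁ X) (ContrEnt K₂ Y) f)
    {u v : ℕ → ↥X} {a : K₁}
    (hu : Tendsto (fun n => (u n : K₁)) atTop (𝓝 a))
    (hv : Tendsto (fun n => (v n : K₁)) atTop (𝓝 a))
    {q q' : K₂} (hq : Tendsto (fun n => (f (u n) : K₂)) atTop (𝓝 q))
    (hq' : Tendsto (fun n => (f (v n) : K₂)) atTop (𝓝 q')) (hqY : q ∉ Y) :
    q = q' := by
  have hE := contr_of_tendsto_diag hu hv
  have himg := hfu _ hE
  have h := contr_forward (u := fun n => (f (u n), f (v n))) himg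
      (fun n => ⟨(u n, v n), Set.mem_range_self n, rfl⟩) hq hq'
  rcases h with h | h
  · exact absurd h.1 hqY
  · exact h

lemma exists_good_map (hXopen : IsOpen X) (hXnc : ¬IsCompact X)
    (hYopen : IsOpen Y) (hYdense : Dense Y) (hYnc : ¬IsCompact Y)
    (h : ↥(Xᶜ) → ↥(Yᶜ)) (hc : Continuous h) :
    ∃ f : ↥X → ↥Y,
      (∀ (u : ℕ → ↥X) (a : ↥(Xᶜ)), Tendsto (fun n => (u n : K₁)) atTop (𝓝 (a : K₁)) →
        Tendsto (fun n => (f (u n) : K₂)) atTop (𝓝 ((h a : K₂)))) ∧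
      (∀ δ : ℝ, 0 < δ → ∃ ε : ℝ, 0 < ε ∧ ∀ x : ↥X, δ ≤ infDist (x : K₁) Xᶜ →
        ε ≤ infDist ((f x : K₂)) Yᶜ) := by
  classical
  have hXcne := corona_nonempty hXnc
  have hYcne := corona_nonempty hYnc
  have hYne : Y.Nonempty := setX_nonempty hYdense hYnc
  haveI : Nonempty ↥Y := hYne.to_subtype
  obtain ⟨D, hDc, hDd⟩ := TopologicalSpace.exists_countable_dense (↥Y)
  obtain ⟨y, hy⟩ := hDc.exists_eq_range hDd.nonempty
  have hyd : ∀ q : K₂, q ∈ Yᶜ → ∀ ε : ℝ, 0 < ε → ∃ m, dist ((y m : K₂)) q < ε := by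
    have hDK : Dense ((fun z : ↥Y => (z : K₂)) '' D) := by
      have h1 : Y ⊆ closure ((fun z : ↥Y => (z : K₂)) '' D) := by
        intro p hp
        have h2 : (⟨p, hp⟩ : ↥Y) ∈ closure D := hDd _
        have h3 := (image_closure_subset_closure_image continuous_subtype_val)
          (Set.mem_image_of_mem _ h2)
        simpa using h3
      intro z
      have h4 := closure_mono h1
      rw [closure_closure] at h4
      exact h4 (hYdense z)
    intro q hq ε hε
    rcases Metric.mem_closure_iff.mp (hDK q) ε hε with ⟨b, hb, hbd⟩
    rcases hb with ⟨z, hzD, rfl⟩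
    have hzr : z ∈ Set.range y := by rw [← hy]; exact hzD
    rcases hzr with ⟨m, rfl⟩
    exact ⟨m, by rw [dist_comm]; exact hbd⟩
  have hproj : ∀ x : ↥X, ∃ p : ↥(Xᶜ), infDist (x : K₁) Xᶜ = dist (x : K₁) (p : K₁) := by
    intro x
    rcases (hXopen.isClosed_compl.isCompact).exists_infDist_eq_dist hXcne (x : K₁) with
      ⟨p, hp, he⟩
    exact ⟨⟨p, hp⟩, he⟩
  choose P hP using hproj
  have hφpos : ∀ x : ↥X, 0 < infDist (x : K₁) Xᶜ := fun x =>
    infDist_pos_of_mem hXopen hXcne x.2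
  have hex : ∀ x : ↥X, ∃ m, dist ((y m : K₂)) ((h (P x) : K₂)) < infDist (x : K₁) Xᶜ :=
    fun x => hyd _ (h (P x)).2 _ (hφpos x)
  refine ⟨fun x => y (Nat.find (hex x)), ?_, ?_⟩
  · -- Q1
    intro u a hu
    have hφ0 : Tendsto (fun n => infDist ((u n : K₁)) Xᶜ) atTop (𝓝 0) := by
      have ht := ((continuous_infDist_pt (Xᶜ)).tendsto (a : K₁)).comp hu
      rwa [infDist_zero_of_mem a.2] at ht
    have hPu : Tendsto (fun n => ((P (u n) : K₁))) atTop (𝓝 (a : K₁)) := by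
      apply tendsto_iff_dist_tendsto_zero.mpr
      apply squeeze_zero (fun n => dist_nonneg) (g := fun n =>
          infDist ((u n : K₁)) Xᶜ + dist ((u n : K₁)) (a : K₁))
      · intro n
        calc dist ((P (u n) : K₁)) (a : K₁)
            ≤ dist ((P (u n) : K₁)) ((u n : K₁)) + dist ((u n : K₁)) (a : K₁) :=
              dist_triangle _ _ _
          _ = infDist ((u n : K₁)) Xᶜ + dist ((u n : K₁)) (a : K₁) := by
              rw [dist_comm, ← hP (u n)]
      · simpa using hφ0.add (tendsto_iff_dist_tendsto_zero.mp hu)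
    have hPu' : Tendsto (fun n => P (u n)) atTop (𝓝 a) := tendsto_subtype_rng.mpr hPu
    have hhu : Tendsto (fun n => ((h (P (u n)) : K₂))) atTop (𝓝 ((h a : K₂))) :=
      ((continuous_subtype_val.comp hc).tendsto a).comp hPu'
    apply tendsto_iff_dist_tendsto_zero.mpr
    apply squeeze_zero (fun n => dist_nonneg) (g := fun n =>
        infDist ((u n : K₁)) Xᶜ + dist ((h (P (u n)) : K₂)) ((h a : K₂)))
    · intro n
      calc dist ((y (Nat.find (hex (u n))) : K₂)) ((h a : K₂))
          ≤ dist ((y (Nat.find (hex (u n))) : K₂)) ((h (P (u n)) : K₂)) +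
              dist ((h (P (u n)) : K₂)) ((h a : K₂)) := dist_triangle _ _ _
        _ ≤ _ := add_le_add (le_of_lt (Nat.find_spec (hex (u n)))) le_rfl
    · simpa using hφ0.add (tendsto_iff_dist_tendsto_zero.mp hhu)
  · -- Q2
    intro δ hδ
    have hcov : Yᶜ ⊆ ⋃ m : ℕ, Metric.ball ((y m : K₂)) δ := by
      intro q hq
      rcases hyd q hq δ hδ with ⟨m, hm⟩
      exact Set.mem_iUnion.mpr ⟨m, by rw [Metric.mem_ball, dist_comm]; exact hm⟩
    obtain ⟨t, ht⟩ := (hYopen.isClosed_compl.isCompact).elim_finite_subcover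
      (fun m : ℕ => Metric.ball ((y m : K₂)) δ) (fun m => Metric.isOpen_ball) hcov
    refine ⟨(Finset.range (t.sup id + 1)).inf' (by simp) (fun m => infDist ((y m : K₂)) Yᶜ),
      ?_, ?_⟩
    · rw [Finset.lt_inf'_iff]
      intro m _
      exact infDist_pos_of_mem hYopen hYcne (y m).2
    · intro x hx
      have hqY : ((h (P x) : K₂)) ∈ Yᶜ := (h (P x)).2
      rcases Set.mem_iUnion₂.mp (ht hqY) with ⟨m, hmt, hmb⟩
      have hfind : Nat.find (hex x) ≤ m := by
        apply Nat.find_min'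
        have hlt : dist ((h (P x) : K₂)) ((y m : K₂)) < δ := Metric.mem_ball.mp hmb
        rw [dist_comm] at hlt
        exact lt_of_lt_of_le hlt hx
      have hmem : Nat.find (hex x) ∈ Finset.range (t.sup id + 1) := by
        rw [Finset.mem_range]
        exact lt_of_le_of_lt hfind (Nat.lt_succ_of_le (Finset.le_sup (f := id) hmt))
      exact Finset.inf'_le _ hmem

end TwoSpace
section TwoSpace2

variable {K₁ K₂ : Type*} [MetricSpace K₁] [MetricSpace K₂] [CompactSpace K₁] [CompactSpace K₂]
variable {X : Set K₁} {Y : Set K₂}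

lemma coarseMap_of_Q (hXopen : IsOpen X) (hXdense : Dense X) (hXnc : ¬IsCompact X)
    (hYopen : IsOpen Y) (hYnc : ¬IsCompact Y)
    (h : ↥(Xᶜ) → ↥(Yᶜ)) (f : ↥X → ↥Y)
    (hQ1 : ∀ (u : ℕ → ↥X) (a : ↥(Xᶜ)), Tendsto (fun n => (u n : K₁)) atTop (𝓝 (a : K₁)) →
      Tendsto (fun n => (f (u n) : K₂)) atTop (𝓝 ((h a : K₂))))
    (hQ2 : ∀ δ : ℝ, 0 < δ → ∃ ε : ℝ, 0 < ε ∧ ∀ x : ↥X, δ ≤ infDist (x : K₁) Xᶜ →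
      ε ≤ infDist ((f x : K₂)) Yᶜ) :
    CoarselyUniformP (ContrEnt K₁ X) (ContrEnt K₂ Y) f ∧
      CoarselyProperP (ContrEnt K₁ X) (ContrEnt K₂ Y) f := by
  have hXcne := corona_nonempty hXnc
  have hYcne := corona_nonempty hYnc
  constructor
  · intro E hE z hz
    rcases mem_closure_iff_seq_limit.mp hz with ⟨c, hc, hcz⟩
    have hc' := fun n => (Set.mem_image _ _ _).mp (hc n)
    choose w hw hweq using hc'
    have hw' := fun n => (Set.mem_image _ _ _).mp (hw n)
    choose p hp hpeq using hw'
    have hc1 : ∀ n, ((f ((p n).1) : K₂)) = (c n).1 := fun n => by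
      rw [← hweq n, ← hpeq n]; rfl
    have hc2 : ∀ n, ((f ((p n).2) : K₂)) = (c n).2 := fun n => by
      rw [← hweq n, ← hpeq n]; rfl
    have hz1 : Tendsto (fun n => ((f ((p n).1) : K₂))) atTop (𝓝 z.1) := by
      simp only [hc1]; exact (continuous_fst.tendsto z).comp hcz
    have hz2 : Tendsto (fun n => ((f ((p n).2) : K₂))) atTop (𝓝 z.2) := by
      simp only [hc2]; exact (continuous_snd.tendsto z).comp hcz
    obtain ⟨a, -, φ₁, hφ₁, ha⟩ := isCompact_univ.tendsto_subseq
      (x := fun n => (((p n).1 : K₁))) (fun n => Set.mem_univ _)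
    obtain ⟨b, -, φ₂, hφ₂, hb⟩ := isCompact_univ.tendsto_subseq
      (x := fun n => (((p (φ₁ n)).2 : K₁))) (fun n => Set.mem_univ _)
    have haψ : Tendsto (fun n => (((p ((φ₁ ∘ φ₂) n)).1 : K₁))) atTop (𝓝 a) :=
      ha.comp hφ₂.tendsto_atTop
    have hbψ : Tendsto (fun n => (((p ((φ₁ ∘ φ₂) n)).2 : K₁))) atTop (𝓝 b) := hb
    have hdisj := contr_forward (u := fun n => p ((φ₁ ∘ φ₂) n)) hE
      (fun n => hp ((φ₁ ∘ φ₂) n)) haψ hbψ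
    have key : ∀ (v : ℕ → ↥X) (cc : K₁) (zc : K₂), cc ∈ X →
        Tendsto (fun n => ((v n : K₁))) atTop (𝓝 cc) →
        Tendsto (fun n => ((f (v n) : K₂))) atTop (𝓝 zc) → zc ∈ Y := by
      intro v cc zc hcc hvc hfvc
      have hpos : 0 < infDist cc Xᶜ := infDist_pos_of_mem hXopen hXcne hcc
      obtain ⟨ε, hε, hQ⟩ := hQ2 (infDist cc Xᶜ / 2) (by linarith)
      have hev : ∀ᶠ n in atTop, infDist cc Xᶜ / 2 ≤ infDist ((v n : K₁)) Xᶜ := by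
        have ht : Tendsto (fun n => infDist ((v n : K₁)) Xᶜ) atTop (𝓝 (infDist cc Xᶜ)) :=
          ((continuous_infDist_pt (Xᶜ)).tendsto cc).comp hvc
        exact Filter.Tendsto.eventually_const_le (by linarith) ht
      have hεinf : ε ≤ infDist zc Yᶜ := by
        apply ge_of_tendsto (((continuous_infDist_pt (Yᶜ)).tendsto zc).comp hfvc)
        filter_upwards [hev] with n hn
        exact hQ _ hn
      exact mem_of_infDist_pos hYopen (lt_of_lt_of_le hε hεinf)
    have hfz1 : Tendsto (fun n => ((f ((p ((φ₁ ∘ φ₂) n)).1) : K₂))) atTop (𝓝 z.1) :=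
      hz1.comp (hφ₁.comp hφ₂).tendsto_atTop
    have hfz2 : Tendsto (fun n => ((f ((p ((φ₁ ∘ φ₂) n)).2) : K₂))) atTop (𝓝 z.2) :=
      hz2.comp (hφ₁.comp hφ₂).tendsto_atTop
    rcases hdisj with ⟨haX, hbX⟩ | hab
    · exact Or.inl ⟨key _ _ _ haX haψ hfz1, key _ _ _ hbX hbψ hfz2⟩
    · subst hab
      by_cases haX : a ∈ X
      · exact Or.inl ⟨key _ _ _ haX haψ hfz1, key _ _ _ haX hbψ hfz2⟩
      · have h1 := hQ1 (fun n => (p ((φ₁ ∘ φ₂) n)).1) ⟨a, haX⟩ haψ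
        have h2 := hQ1 (fun n => (p ((φ₁ ∘ φ₂) n)).2) ⟨a, haX⟩ hbψ
        refine Or.inr ?_
        show z.1 = z.2
        rw [tendsto_nhds_unique hfz1 h1, tendsto_nhds_unique hfz2 h2]
  · intro B hB
    have hclB := closure_image_subset_of_bounded hB
    apply bounded_of_closure_image_subset (setX_nonempty hXdense hXnc)
    intro z hz
    by_contra hzX
    rcases mem_closure_iff_seq_limit.mp hz with ⟨c, hc, hcz⟩
    have hc' := fun n => (Set.mem_image _ _ _).mp (hc n)
    choose b hbB hbeq using hc'
    have hbz : Tendsto (fun n => ((b n : K₁))) atTop (𝓝 z) := by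
      simp only [hbeq]; exact hcz
    have hfb := hQ1 b ⟨z, hzX⟩ hbz
    have hmem : ((h ⟨z, hzX⟩ : K₂)) ∈ closure ((fun q : ↥Y => (q : K₂)) '' B) :=
      mem_closure_of_tendsto hfb
        (Filter.Eventually.of_forall fun n => Set.mem_image_of_mem _ (hbB n))
    exact (h ⟨z, hzX⟩).2 (hclB hmem)

lemma close_of_Q (hXopen : IsOpen X) (hXnc : ¬IsCompact X) (hYopen : IsOpen Y)
    (h : ↥(Xᶜ) → ↥(Yᶜ)) (h' : ↥(Yᶜ) → ↥(Xᶜ)) (hinv : ∀ a, h' (h a) = a)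
    (f : ↥X → ↥Y) (g : ↥Y → ↥X)
    (hQ1f : ∀ (u : ℕ → ↥X) (a : ↥(Xᶜ)), Tendsto (fun n => (u n : K₁)) atTop (𝓝 (a : K₁)) →
      Tendsto (fun n => (f (u n) : K₂)) atTop (𝓝 ((h a : K₂))))
    (hQ2f : ∀ δ : ℝ, 0 < δ → ∃ ε : ℝ, 0 < ε ∧ ∀ x : ↥X, δ ≤ infDist (x : K₁) Xᶜ →
      ε ≤ infDist ((f x : K₂)) Yᶜ)
    (hQ1g : ∀ (u : ℕ → ↥Y) (b : ↥(Yᶜ)), Tendsto (fun n => (u n : K₂)) atTop (𝓝 (b : K₂)) →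
      Tendsto (fun n => (g (u n) : K₁)) atTop (𝓝 ((h' b : K₁))))
    (hQ2g : ∀ δ : ℝ, 0 < δ → ∃ ε : ℝ, 0 < ε ∧ ∀ x : ↥Y, δ ≤ infDist (x : K₂) Yᶜ →
      ε ≤ infDist ((g x : K₁)) Xᶜ) :
    ContrEnt K₁ X (Set.range fun s => ((g ∘ f) s, id s)) := by
  have hXcne := corona_nonempty hXnc
  intro z hz
  rcases mem_closure_iff_seq_limit.mp hz with ⟨c, hc, hcz⟩
  have hc' := fun n => (Set.mem_image _ _ _).mp (hc n)
  choose w hw hweq using hc'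
  have hw' := fun n => Set.mem_range.mp (hw n)
  choose s hseq using hw'
  have hc1 : ∀ n, ((g (f (s n)) : K₁)) = (c n).1 := fun n => by
    rw [← hweq n, ← hseq n]; rfl
  have hc2 : ∀ n, ((s n : K₁)) = (c n).2 := fun n => by
    rw [← hweq n, ← hseq n]; rfl
  have hz1 : Tendsto (fun n => ((g (f (s n)) : K₁))) atTop (𝓝 z.1) := by
    simp only [hc1]; exact (continuous_fst.tendsto z).comp hcz
  have hz2 : Tendsto (fun n => ((s n : K₁))) atTop (𝓝 z.2) := by
    simp only [hc2]; exact (continuous_snd.tendsto z).comp hcz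
  by_cases hz2X : z.2 ∈ X
  · have hpos := infDist_pos_of_mem hXopen hXcne hz2X
    obtain ⟨ε, hε, hQf⟩ := hQ2f (infDist z.2 Xᶜ / 2) (by linarith)
    obtain ⟨ε', hε', hQg⟩ := hQ2g ε hε
    have hev : ∀ᶠ n in atTop, infDist z.2 Xᶜ / 2 ≤ infDist ((s n : K₁)) Xᶜ :=
      Filter.Tendsto.eventually_const_le (by linarith)
        (((continuous_infDist_pt (Xᶜ)).tendsto z.2).comp hz2)
    have hle : ε' ≤ infDist z.1 Xᶜ := by
      apply ge_of_tendsto (((continuous_infDist_pt (Xᶜ)).tendsto z.1).comp hz1)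
      filter_upwards [hev] with n hn
      exact hQg _ (hQf _ hn)
    exact Or.inl ⟨mem_of_infDist_pos hXopen (lt_of_lt_of_le hε' hle), hz2X⟩
  · have h1 := hQ1f s ⟨z.2, hz2X⟩ hz2
    have h2 := hQ1g (fun n => f (s n)) (h ⟨z.2, hz2X⟩) h1
    rw [hinv] at h2
    exact Or.inr (tendsto_nhds_unique hz1 h2)

end TwoSpace2
section TwoSpace3

variable {K₁ K₂ : Type*} [MetricSpace K₁] [MetricSpace K₂] [CompactSpace K₁] [CompactSpace K₂]
variable {X : Set K₁} {Y : Set K₂}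

lemma seq_to_boundary (hXdense : Dense X) (a : ↥(Xᶜ)) :
    ∃ u : ℕ → ↥X, Tendsto (fun n => (u n : K₁)) atTop (𝓝 (a : K₁)) := by
  rcases mem_closure_iff_seq_limit.mp (hXdense (a : K₁)) with ⟨c, hc, hcz⟩
  exact ⟨fun n => ⟨c n, hc n⟩, hcz⟩

lemma exists_limit_map (hXdense : Dense X) (hYopen : IsOpen Y) (hYnc : ¬IsCompact Y)
    {f : ↥X → ↥Y}
    (hfu : CoarselyUniformP (ContrEnt K₁ X) (ContrEnt K₂ Y) f)
    (hfp : CoarselyProperP (ContrEnt K₁ X) (ContrEnt K₂ Y) f) :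
    ∃ H : ↥(Xᶜ) → ↥(Yᶜ), ∀ (a : ↥(Xᶜ)) (u : ℕ → ↥X),
      Tendsto (fun n => (u n : K₁)) atTop (𝓝 (a : K₁)) →
      Tendsto (fun n => (f (u n) : K₂)) atTop (𝓝 ((H a : K₂))) := by
  have hexH : ∀ a : ↥(Xᶜ), ∃ q : ↥(Yᶜ), ∀ u : ℕ → ↥X,
      Tendsto (fun n => (u n : K₁)) atTop (𝓝 (a : K₁)) →
      Tendsto (fun n => (f (u n) : K₂)) atTop (𝓝 (q : K₂)) := by
    intro a
    obtain ⟨u₀, hu₀⟩ := seq_to_boundary hXdense a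
    obtain ⟨q₀, -, φ, hφ, hq₀⟩ := isCompact_univ.tendsto_subseq
      (x := fun n => ((f (u₀ n) : K₂))) (fun n => Set.mem_univ _)
    have hu₀φ : Tendsto (fun n => ((u₀ (φ n) : K₁))) atTop (𝓝 (a : K₁)) :=
      hu₀.comp hφ.tendsto_atTop
    have hq₀' : Tendsto (fun n => ((f (u₀ (φ n)) : K₂))) atTop (𝓝 q₀) := hq₀
    have hq₀Y : q₀ ∉ Y := tendsto_corona_of_proper hYopen hYnc hfp a.2 hu₀φ hq₀'
    refine ⟨⟨q₀, hq₀Y⟩, ?_⟩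
    intro u hu
    apply tendsto_of_subseq_tendsto
    intro ns hns
    have huns : Tendsto (fun n => ((u (ns n) : K₁))) atTop (𝓝 (a : K₁)) := hu.comp hns
    obtain ⟨q', -, ms, hms, hq'⟩ := isCompact_univ.tendsto_subseq
      (x := fun n => ((f (u (ns n)) : K₂))) (fun n => Set.mem_univ _)
    have humsx : Tendsto (fun n => ((u (ns (ms n)) : K₁))) atTop (𝓝 (a : K₁)) :=
      huns.comp hms.tendsto_atTop
    have hq'' : Tendsto (fun n => ((f (u (ns (ms n))) : K₂))) atTop (𝓝 q') := hq'
    have hq'Y : q' ∉ Y := tendsto_corona_of_proper hYopen hYnc hfp a.2 humsx hq''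
    have heq : q' = q₀ := unique_limit_of_uniform hfu humsx hu₀φ hq'' hq₀' hq'Y
    exact ⟨ms, heq ▸ hq''⟩
  choose H hH using hexH
  exact ⟨H, fun a u hu => hH a u hu⟩

lemma limit_map_continuous (hXdense : Dense X) {f : ↥X → ↥Y} {H : ↥(Xᶜ) → ↥(Yᶜ)}
    (hH : ∀ (a : ↥(Xᶜ)) (u : ℕ → ↥X), Tendsto (fun n => (u n : K₁)) atTop (𝓝 (a : K₁)) →
      Tendsto (fun n => (f (u n) : K₂)) atTop (𝓝 ((H a : K₂)))) :
    Continuous H := by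
  have hseq : SeqContinuous H := by
    intro aseq a haconv
    have h1 : Tendsto (fun m => ((aseq m : K₁))) atTop (𝓝 (a : K₁)) :=
      (continuous_subtype_val.tendsto a).comp haconv
    have hm : ∀ m : ℕ, ∃ x : ↥X, dist ((x : K₁)) ((aseq m : K₁)) < 1/(m+1) ∧
        dist ((f x : K₂)) ((H (aseq m) : K₂)) < 1/(m+1) := by
      intro m
      obtain ⟨u, hu⟩ := seq_to_boundary hXdense (aseq m)
      have hfu := hH (aseq m) u hu
      have hpos : (0:ℝ) < 1/(m+1) := by positivity
      obtain ⟨N₁, hN₁⟩ := Metric.tendsto_atTop.mp hu _ hpos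
      obtain ⟨N₂, hN₂⟩ := Metric.tendsto_atTop.mp hfu _ hpos
      exact ⟨u (max N₁ N₂), hN₁ _ (le_max_left _ _), hN₂ _ (le_max_right _ _)⟩
    choose x hx1 hx2 using hm
    have hxa : Tendsto (fun m => ((x m : K₁))) atTop (𝓝 (a : K₁)) := by
      apply tendsto_iff_dist_tendsto_zero.mpr
      apply squeeze_zero (fun m => dist_nonneg)
        (g := fun m => 1/(m+1) + dist ((aseq m : K₁)) (a : K₁))
      · intro m
        calc dist ((x m : K₁)) (a : K₁)
            ≤ dist ((x m : K₁)) ((aseq m : K₁)) + dist ((aseq m : K₁)) (a : K₁) :=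
              dist_triangle _ _ _
          _ ≤ _ := add_le_add (le_of_lt (hx1 m)) le_rfl
      · have ht := tendsto_one_div_add_atTop_nhds_zero_nat.add
          (tendsto_iff_dist_tendsto_zero.mp h1)
        simpa using ht
    have hfx := hH a x hxa
    rw [tendsto_subtype_rng]
    apply tendsto_iff_dist_tendsto_zero.mpr
    apply squeeze_zero (fun m => dist_nonneg)
      (g := fun m => 1/(m+1) + dist ((f (x m) : K₂)) ((H a : K₂)))
    · intro m
      calc dist (((H ∘ aseq) m : K₂)) ((H a : K₂))
          ≤ dist ((H (aseq m) : K₂)) ((f (x m) : K₂)) + dist ((f (x m) : K₂)) ((H a : K₂)) :=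
            dist_triangle _ _ _
        _ ≤ _ := by
            have h3 := hx2 m
            rw [dist_comm] at h3
            exact add_le_add h3.le le_rfl
    · have ht := tendsto_one_div_add_atTop_nhds_zero_nat.add
        (tendsto_iff_dist_tendsto_zero.mp hfx)
      simpa using ht
  exact hseq.continuous

end TwoSpace3
section Assemble

variable {K₁ K₂ : Type*} [MetricSpace K₁] [MetricSpace K₂] [CompactSpace K₁] [CompactSpace K₂]
variable {X : Set K₁} {Y : Set K₂}

lemma homeo_of_coarse (hXopen : IsOpen X) (hXdense : Dense X) (hXnc : ¬IsCompact X)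
    (hYopen : IsOpen Y) (hYdense : Dense Y) (hYnc : ¬IsCompact Y)
    (f : ↥X → ↥Y) (g : ↥Y → ↥X)
    (hfu : CoarselyUniformP (ContrEnt K₁ X) (ContrEnt K₂ Y) f)
    (hfp : CoarselyProperP (ContrEnt K₁ X) (ContrEnt K₂ Y) f)
    (hgu : CoarselyUniformP (ContrEnt K₂ Y) (ContrEnt K₁ X) g)
    (hgp : CoarselyProperP (ContrEnt K₂ Y) (ContrEnt K₁ X) g)
    (hgf : ContrEnt K₁ X (Set.range fun s => ((g ∘ f) s, id s)))
    (hfg : ContrEnt K₂ Y (Set.range fun s => ((f ∘ g) s, id s))) :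
    Nonempty (↥(Xᶜ) ≃ₜ ↥(Yᶜ)) := by
  obtain ⟨H, hH⟩ := exists_limit_map hXdense hYopen hYnc hfu hfp
  obtain ⟨H', hH'⟩ := exists_limit_map hYdense hXopen hXnc hgu hgp
  have hinv1 : ∀ a, H' (H a) = a := by
    intro a
    obtain ⟨u, hu⟩ := seq_to_boundary hXdense a
    have h1 := hH a u hu
    have h2 : Tendsto (fun n => ((g (f (u n)) : K₁))) atTop (𝓝 ((H' (H a) : K₁))) :=
      hH' (H a) (fun n => f (u n)) h1
    have h3 := contr_forward (u := fun n => (g (f (u n)), u n)) hgf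
      (fun n => ⟨u n, rfl⟩) h2 hu
    rcases h3 with ⟨h4, -⟩ | h4
    · exact absurd h4 (H' (H a)).2
    · exact Subtype.ext h4
  have hinv2 : ∀ b, H (H' b) = b := by
    intro b
    obtain ⟨u, hu⟩ := seq_to_boundary hYdense b
    have h1 := hH' b u hu
    have h2 : Tendsto (fun n => ((f (g (u n)) : K₂))) atTop (𝓝 ((H (H' b) : K₂))) :=
      hH (H' b) (fun n => g (u n)) h1
    have h3 := contr_forward (u := fun n => (f (g (u n)), u n)) hfg
      (fun n => ⟨u n, rfl⟩) h2 hu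
    rcases h3 with ⟨h4, -⟩ | h4
    · exact absurd h4 (H (H' b)).2
    · exact Subtype.ext h4
  exact ⟨Homeomorph.mk ⟨H, H', hinv1, hinv2⟩
    (limit_map_continuous hXdense hH) (limit_map_continuous hYdense hH')⟩

end Assemble


/-- Two spaces whose coarse structures are induced by metrisable compactifications
are coarsely equivalent iff their coronas are homeomorphic. -/
theorem coarselyEquivalent_iff_coronas_homeomorphic
    (K₁ K₂ : Type*) [TopologicalSpace K₁] [TopologicalSpace K₂]
    [CompactSpace K₁] [CompactSpace K₂]
    [TopologicalSpace.MetrizableSpace K₁] [TopologicalSpace.MetrizableSpace K₂]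
    (X : Set K₁) (Y : Set K₂)
    (hXopen : IsOpen X) (hXdense : Dense X) (hXnc : ¬ IsCompact X)
    (hYopen : IsOpen Y) (hYdense : Dense Y) (hYnc : ¬ IsCompact Y) :
    CoarselyEquivalentP (ContrEnt K₁ X) (ContrEnt K₂ Y) ↔
      Nonempty (↥(Xᶜ) ≃ₜ ↥(Yᶜ)) := by
  letI := TopologicalSpace.metrizableSpaceMetric K₁
  letI := TopologicalSpace.metrizableSpaceMetric K₂
  constructor
  · rintro ⟨f, g, ⟨hfu, hfp⟩, ⟨hgu, hgp⟩, hgf, hfg⟩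
    exact homeo_of_coarse hXopen hXdense hXnc hYopen hYdense hYnc f g hfu hfp hgu hgp hgf hfg
  · rintro ⟨e⟩
    obtain ⟨f, hQ1f, hQ2f⟩ := exists_good_map hXopen hXnc hYopen hYdense hYnc e e.continuous
    obtain ⟨g, hQ1g, hQ2g⟩ :=
      exists_good_map hYopen hYnc hXopen hXdense hXnc e.symm e.symm.continuous
    exact ⟨f, g, coarseMap_of_Q hXopen hXdense hXnc hYopen hYnc _ f hQ1f hQ2f,
      coarseMap_of_Q hYopen hYdense hYnc hXopen hXnc _ g hQ1g hQ2g,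
      close_of_Q hXopen hXnc hYopen e e.symm (fun a => e.symm_apply_apply a) f g
        hQ1f hQ2f hQ1g hQ2g,
      close_of_Q hYopen hYnc hXopen e.symm e (fun b => e.apply_symm_apply b) g f
        hQ1g hQ2g hQ1f hQ2f⟩
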